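/- For all real 3×3 matrices A, B, C with A and C symmetric, the tensor field K = K_{A,B,C} satisfies the valence-two Killing tensor equation on flat Euclidean 3-space: for every x ∈ ℝ³ and all indices i, j, k ∈ {1,2,3}, ∂_k K_{ij}(x) + ∂_i K_{jk}(x) + ∂_j K_{ki}(x) = 0 (equivalently, the total symmetrization of ∂_k K_{ij} vanishes). -/

import Mathlib

open Matrix

/-- 3×3 real matrices. -/
abbrev M3 := Matrix (Fin 3) (Fin 3) ℝ

/-- The cross-product matrix `Sₓ`, satisfying `Sₓ v = x × v`. -/
def Smat (x : Fin 3 → ℝ) : M3 :=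
  !![0, -x 2, x 1; x 2, 0, -x 0; -x 1, x 0, 0]

/-- The Killing tensor field `K_{A,B,C}(x) = A + Sₓ Bᵀ + B Sₓᵀ + Sₓ C Sₓᵀ`. -/
def KABC (A B C : M3) (x : Fin 3 → ℝ) : M3 :=
  A + Smat x * Bᵀ + B * (Smat x)ᵀ + Smat x * C * (Smat x)ᵀ

/-- Partial derivative `∂_k f` at `x`. -/
noncomputable def pder (k : Fin 3) (f : (Fin 3 → ℝ) → ℝ) (x : Fin 3 → ℝ) : ℝ :=
  fderiv ℝ f x (Pi.single k 1)

lemma Smat_add (u v : Fin 3 → ℝ) : Smat (u + v) = Smat u + Smat v := by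
  ext a b; fin_cases a <;> fin_cases b <;> simp [Smat] <;> ring

lemma Smat_smul (c : ℝ) (v : Fin 3 → ℝ) : Smat (c • v) = c • Smat v := by
  ext a b; fin_cases a <;> fin_cases b <;> simp [Smat]

/-- The `(a,b)` entry of `Smat` as a continuous linear map in `x`. -/
noncomputable def SL (a b : Fin 3) : (Fin 3 → ℝ) →L[ℝ] ℝ :=
  LinearMap.toContinuousLinearMap
    { toFun := fun v => Smat v a b
      map_add' := fun u v => by simpa using congrFun (congrFun (Smat_add u v) a) b
      map_smul' := fun c v => by simpa using congrFun (congrFun (Smat_smul c v) a) b }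

lemma SL_apply (a b : Fin 3) (v : Fin 3 → ℝ) : SL a b v = Smat v a b := rfl

lemma hasS (a b : Fin 3) (x : Fin 3 → ℝ) :
    HasFDerivAt (fun y => Smat y a b) (SL a b) x := (SL a b).hasFDerivAt

lemma pder_KABC (A B C : M3) (i j k : Fin 3) (x : Fin 3 → ℝ) :
    pder k (fun y => KABC A B C y i j) x
      = (∑ m, B j m * Smat (Pi.single k 1) i m)
        + (∑ m, B i m * Smat (Pi.single k 1) j m)
        + (∑ n, ((∑ m, Smat x i m * C m n) * Smat (Pi.single k 1) j n
            + Smat x j n * (∑ m, C m n * Smat (Pi.single k 1) i m))) := by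
  have hfun : (fun y => KABC A B C y i j)
      = fun y => A i j + (∑ m, Smat y i m * B j m) + (∑ m, B i m * Smat y j m)
          + (∑ n, (∑ m, Smat y i m * C m n) * Smat y j n) := by
    funext y
    simp [KABC, Matrix.mul_apply, Matrix.add_apply, Matrix.transpose_apply]
  have h1 : HasFDerivAt (fun y => ∑ m, Smat y i m * B j m)
      (∑ m, B j m • SL i m) x :=
    HasFDerivAt.fun_sum fun m _ => (hasS i m x).mul_const (B j m)
  have h2 : HasFDerivAt (fun y => ∑ m, B i m * Smat y j m)
      (∑ m, B i m • SL j m) x :=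
    HasFDerivAt.fun_sum fun m _ => (hasS j m x).const_mul (B i m)
  have h3 : HasFDerivAt (fun y => ∑ n, (∑ m, Smat y i m * C m n) * Smat y j n)
      (∑ n, ((∑ m, Smat x i m * C m n) • SL j n
        + Smat x j n • (∑ m, C m n • SL i m))) x := by
    refine HasFDerivAt.fun_sum fun n _ => ?_
    exact (HasFDerivAt.fun_sum fun m _ => (hasS i m x).mul_const (C m n)).mul (hasS j n x)
  have h : HasFDerivAt (fun y => KABC A B C y i j)
      ((∑ m, B j m • SL i m) + (∑ m, B i m • SL j m)
        + ∑ n, ((∑ m, Smat x i m * C m n) • SL j n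
          + Smat x j n • (∑ m, C m n • SL i m))) x := by
    rw [hfun]
    simpa using (((hasFDerivAt_const (A i j) x).fun_add h1).fun_add h2).fun_add h3
  rw [pder, h.fderiv]
  simp only [ContinuousLinearMap.add_apply, ContinuousLinearMap.coe_sum',
    Finset.sum_apply, ContinuousLinearMap.smul_apply, SL_apply, smul_eq_mul]

set_option maxHeartbeats 2000000 in
/-- `K_{A,B,C}` satisfies the valence-two Killing tensor equation on
Euclidean 3-space: the total symmetrization of `∂_k K_{ij}` vanishes. -/
theorem KABC_satisfies_Killing_equation
    (A B C : M3) (hA : A.IsSymm) (hC : C.IsSymm)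
    (x : Fin 3 → ℝ) (i j k : Fin 3) :
    pder k (fun y => KABC A B C y i j) x
      + pder i (fun y => KABC A B C y j k) x
      + pder j (fun y => KABC A B C y k i) x = 0 := by
  have c01 := hC.apply 1 0
  have c02 := hC.apply 2 0
  have c12 := hC.apply 2 1
  rw [pder_KABC, pder_KABC, pder_KABC]
  fin_cases i <;> fin_cases j <;> fin_cases k <;>
    simp [Fin.sum_univ_three, Smat, Pi.single_apply, c01, c02, c12] <;> ring
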